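/- Let N ≥ 1 users share K ≥ 1 channels via a channel assignment a : {1,…,N} → {1,…,K} in which every channel is used by at least 2 users, let P ∈ (0,1)^N be transmission probabilities, let u_n(k) > 0 be collision-free utilities, and let R_n(a) = u_n(a(n)) · P_n · Π_{i≠n, a(i)=a(n)}(1 − P_i). Then the sum log rate of the network satisfies Σ_{n=1}^{N} log R_n(a) ≤ Σ_{n=1}^{N} max_{k} log u_n(k) + N·log(K/N) + N·(N/K − 1)·log(1 − K/N). -/

import Mathlib

/-- per-user optimum bound via `log x ≤ x - 1`. -/
lemma user_log_bound {p m : ℝ} (hp0 : 0 < p) (hp1 : p < 1) (hm : 2 ≤ m) :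
    Real.log p + (m - 1) * Real.log (1 - p) ≤
      (m - 1) * Real.log (m - 1) - m * Real.log m := by
  have hm0 : (0:ℝ) < m := by linarith
  have hm1 : (0:ℝ) < m - 1 := by linarith
  have h1p : (0:ℝ) < 1 - p := by linarith
  have h1 : Real.log (m * p) ≤ m * p - 1 :=
    Real.log_le_sub_one_of_pos (by positivity)
  have e1 : Real.log (m * p) = Real.log m + Real.log p :=
    Real.log_mul hm0.ne' hp0.ne'
  have h2 : Real.log ((1 - p) * m / (m - 1)) ≤ (1 - p) * m / (m - 1) - 1 :=
    Real.log_le_sub_one_of_pos (by positivity)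
  have e2 : Real.log ((1 - p) * m / (m - 1))
      = Real.log (1 - p) + Real.log m - Real.log (m - 1) := by
    rw [Real.log_div (by positivity) hm1.ne', Real.log_mul h1p.ne' hm0.ne']
  rw [e1] at h1
  rw [e2] at h2
  have h2' : (m - 1) * (Real.log (1 - p) + Real.log m - Real.log (m - 1))
      ≤ (1 - p) * m - (m - 1) := by
    have := mul_le_mul_of_nonneg_left h2 hm1.le
    have key : (m - 1) * ((1 - p) * m / (m - 1) - 1) = (1 - p) * m - (m - 1) := by
      field_simp
    linarith [key ▸ this]
  nlinarith [h1, h2']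

noncomputable def fent (x : ℝ) : ℝ := x * (x - 1) * Real.log (x - 1) - x ^ 2 * Real.log x

lemma fent_hasDerivAt {x : ℝ} (hx : 1 < x) :
    HasDerivAt fent ((2 * x - 1) * Real.log (x - 1) - 2 * x * Real.log x) x := by
  have hx0 : (0:ℝ) < x := by linarith
  have hx1 : (0:ℝ) < x - 1 := by linarith
  have hsub : HasDerivAt (fun y : ℝ => y - 1) 1 x := (hasDerivAt_id x).sub_const 1
  have hlog1 : HasDerivAt (fun y : ℝ => Real.log (y - 1)) (1 / (x - 1)) x := by
    simpa using hsub.log hx1.ne'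
  have hlogx : HasDerivAt Real.log x⁻¹ x := Real.hasDerivAt_log hx0.ne'
  have hmul : HasDerivAt (fun y : ℝ => y * (y - 1)) (1 * (x - 1) + x * 1) x :=
    (hasDerivAt_id x).mul hsub
  have h1 : HasDerivAt (fun y : ℝ => y * (y - 1) * Real.log (y - 1))
      ((1 * (x - 1) + x * 1) * Real.log (x - 1) + x * (x - 1) * (1 / (x - 1))) x :=
    hmul.mul hlog1
  have h2 : HasDerivAt (fun y : ℝ => y ^ 2 * Real.log y)
      (((2:ℕ) : ℝ) * x ^ (2 - 1) * Real.log x + x ^ 2 * x⁻¹) x :=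
    (hasDerivAt_pow 2 x).mul hlogx
  have := h1.sub h2
  refine this.congr_deriv ?_
  have e1 : x * (x - 1) * (1 / (x - 1)) = x := by
    rw [mul_assoc, mul_one_div_cancel hx1.ne', mul_one]
  have e2 : x ^ 2 * x⁻¹ = x := by
    rw [pow_two, mul_assoc, mul_inv_cancel₀ hx0.ne', mul_one]
  rw [e1, e2, show (2:ℕ) - 1 = 1 from rfl, pow_one]
  push_cast
  ring

lemma fent_deriv2 {x : ℝ} (hx : 1 < x) :
    HasDerivAt (fun y => (2 * y - 1) * Real.log (y - 1) - 2 * y * Real.log y)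
      (2 * Real.log (x - 1) + (2 * x - 1) / (x - 1) - (2 * Real.log x + 2)) x := by
  have hx0 : (0:ℝ) < x := by linarith
  have hx1 : (0:ℝ) < x - 1 := by linarith
  have hsub : HasDerivAt (fun y : ℝ => y - 1) 1 x := (hasDerivAt_id x).sub_const 1
  have hlog1 : HasDerivAt (fun y : ℝ => Real.log (y - 1)) (1 / (x - 1)) x := by
    simpa using hsub.log hx1.ne'
  have hlogx : HasDerivAt Real.log x⁻¹ x := Real.hasDerivAt_log hx0.ne'
  have ha : HasDerivAt (fun y : ℝ => 2 * y - 1) 2 x := by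
    simpa using ((hasDerivAt_id x).const_mul 2).sub_const 1
  have h1 : HasDerivAt (fun y : ℝ => (2 * y - 1) * Real.log (y - 1))
      (2 * Real.log (x - 1) + (2 * x - 1) * (1 / (x - 1))) x := ha.mul hlog1
  have hb : HasDerivAt (fun y : ℝ => 2 * y) 2 x := by
    simpa using (hasDerivAt_id x).const_mul 2
  have h2 : HasDerivAt (fun y : ℝ => 2 * y * Real.log y)
      (2 * Real.log x + 2 * x * x⁻¹) x := hb.mul hlogx
  have := h1.sub h2
  refine this.congr_deriv ?_
  rw [mul_one_div, mul_assoc (2:ℝ) x, mul_inv_cancel₀ hx0.ne', mul_one]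

lemma fent_concave : ConcaveOn ℝ (Set.Ici (2:ℝ)) fent := by
  have hint : interior (Set.Ici (2:ℝ)) = Set.Ioi 2 := interior_Ici
  refine concaveOn_of_hasDerivWithinAt2_nonpos (f' := fun x =>
      (2 * x - 1) * Real.log (x - 1) - 2 * x * Real.log x)
    (f'' := fun x => 2 * Real.log (x - 1) + (2 * x - 1) / (x - 1) - (2 * Real.log x + 2))
    (convex_Ici 2) ?_ ?_ ?_ ?_
  · intro x hx
    exact (fent_hasDerivAt (by simp at hx; linarith)).continuousAt.continuousWithinAt
  · intro x hx
    rw [hint] at hx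
    exact (fent_hasDerivAt (by simp at hx; linarith)).hasDerivWithinAt
  · intro x hx
    rw [hint] at hx
    exact (fent_deriv2 (by simp at hx; linarith)).hasDerivWithinAt
  · intro x hx
    rw [hint] at hx
    simp only [Set.mem_Ioi] at hx
    have hx0 : (0:ℝ) < x := by linarith
    have hx1 : (0:ℝ) < x - 1 := by linarith
    have hlog : Real.log (x - 1) - Real.log x = Real.log ((x - 1) / x) :=
      (Real.log_div hx1.ne' hx0.ne').symm
    have h : Real.log ((x - 1) / x) ≤ (x - 1) / x - 1 :=
      Real.log_le_sub_one_of_pos (by positivity)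
    have key : 2 * ((x - 1) / x - 1) + (2 * x - 1) / (x - 1) - 2 = (2 - x) / (x * (x - 1)) := by
      field_simp
      ring
    have h2 : (2 - x) / (x * (x - 1)) ≤ 0 :=
      div_nonpos_iff.2 (.inr ⟨by linarith, by positivity⟩)
    linarith [hlog ▸ (by linarith [h] : Real.log (x-1) - Real.log x ≤ (x-1)/x - 1)]

/-- network sum log rate upper bound when every channel carries at least two
users:
`∑ log R_n(a) ≤ ∑ max_k log u_n(k) + N log (K/N) + N (N/K - 1) log (1 - K/N)`. -/
theorem network_sum_log_rate_bound
    (N K : ℕ) (hN : 1 ≤ N) (hK : 1 ≤ K)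
    (a : Fin N → Fin K)
    (ha : ∀ k : Fin K, 2 ≤ (Finset.univ.filter (fun n => a n = k)).card)
    (P : Fin N → ℝ) (hP : ∀ n, P n ∈ Set.Ioo (0:ℝ) 1)
    (u : Fin N → Fin K → ℝ) (hu : ∀ n k, 0 < u n k) :
    ∑ n : Fin N,
        Real.log (u n (a n) * P n *
          ∏ i ∈ Finset.univ.filter (fun i => i ≠ n ∧ a i = a n), (1 - P i)) ≤
      (∑ n : Fin N,
        Finset.univ.sup' ⟨⟨0, hK⟩, Finset.mem_univ _⟩ (fun k => Real.log (u n k))) +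
      (N : ℝ) * Real.log ((K : ℝ) / (N : ℝ)) +
      (N : ℝ) * ((N : ℝ) / (K : ℝ) - 1) * Real.log (1 - (K : ℝ) / (N : ℝ)) := by
  classical
  set S : Fin K → Finset (Fin N) := fun k => Finset.univ.filter (fun n => a n = k) with hSdef
  set m : Fin K → ℝ := fun k => ((S k).card : ℝ) with hmdef
  have hcard : (Finset.univ : Finset (Fin N)).card = ∑ k : Fin K, (S k).card :=
    Finset.card_eq_sum_card_fiberwise (fun n _ => Finset.mem_univ (a n))
  have h2K : 2 * K ≤ N := by
    calc 2 * K = ∑ _k : Fin K, 2 := by simp [mul_comm]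
      _ ≤ ∑ k : Fin K, (S k).card := Finset.sum_le_sum (fun k _ => ha k)
      _ = N := by rw [← hcard]; simp
  have hK0 : (0:ℝ) < (K:ℝ) := by exact_mod_cast hK
  have hN0 : (0:ℝ) < (N:ℝ) := by exact_mod_cast hN
  have hNKR : 2 * (K:ℝ) ≤ (N:ℝ) := by exact_mod_cast h2K
  have hNK : (0:ℝ) < (N:ℝ) - K := by linarith
  have hm2 : ∀ k, (2:ℝ) ≤ m k := fun k => by simp only [hmdef, hSdef]; exact_mod_cast ha k
  set T : Fin N → ℝ := fun n => Real.log (P n) +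
    ∑ i ∈ Finset.univ.filter (fun i => i ≠ n ∧ a i = a n), Real.log (1 - P i) with hTdef
  -- split the logarithms
  have hsplit : ∀ n : Fin N,
      Real.log (u n (a n) * P n *
        ∏ i ∈ Finset.univ.filter (fun i => i ≠ n ∧ a i = a n), (1 - P i))
      = Real.log (u n (a n)) + T n := by
    intro n
    have h1 : ∀ i ∈ Finset.univ.filter (fun i => i ≠ n ∧ a i = a n), (1 - P i) ≠ 0 :=
      fun i _ => by have := (hP i).2; intro h; linarith
    rw [Real.log_mul (mul_pos (hu n (a n)) (hP n).1).ne'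
        (Finset.prod_ne_zero_iff.2 h1),
      Real.log_mul (hu n (a n)).ne' (hP n).1.ne', Real.log_prod h1]
    simp only [hTdef]
    ring
  -- bound on the utility part
  have hu_bound : ∑ n : Fin N, Real.log (u n (a n)) ≤
      ∑ n : Fin N, Finset.univ.sup' ⟨⟨0, hK⟩, Finset.mem_univ _⟩ (fun k => Real.log (u n k)) :=
    Finset.sum_le_sum fun n _ =>
      Finset.le_sup' (fun k => Real.log (u n k)) (Finset.mem_univ (a n))
  -- per-channel bound
  have hchan : ∀ k : Fin K, ∑ n ∈ S k, T n ≤ fent (m k) := by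
    intro k
    have hfib : ∀ n ∈ S k,
        Finset.univ.filter (fun i => i ≠ n ∧ a i = a n) = (S k).erase n := by
      intro n hn
      have han : a n = k := by simpa [hSdef, Finset.mem_filter] using hn
      ext i
      simp [hSdef, Finset.mem_erase, Finset.mem_filter, han, and_comm]
    have hm2k := hm2 k
    calc ∑ n ∈ S k, T n
        = ∑ n ∈ S k, (Real.log (P n) +
            ((∑ i ∈ S k, Real.log (1 - P i)) - Real.log (1 - P n))) := by
          refine Finset.sum_congr rfl fun n hn => ?_
          simp only [hTdef]
          rw [hfib n hn, Finset.sum_erase_eq_sub hn]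
      _ = ∑ n ∈ S k, (Real.log (P n) + (m k - 1) * Real.log (1 - P n)) := by
          rw [Finset.sum_add_distrib, Finset.sum_add_distrib]
          congr 1
          rw [Finset.sum_sub_distrib, Finset.sum_const, nsmul_eq_mul, ← Finset.mul_sum]
          simp only [hmdef]
          ring
      _ ≤ ∑ _n ∈ S k, ((m k - 1) * Real.log (m k - 1) - m k * Real.log (m k)) :=
          Finset.sum_le_sum fun n _ => user_log_bound (hP n).1 (hP n).2 hm2k
      _ = fent (m k) := by
          rw [Finset.sum_const, nsmul_eq_mul, fent]
          simp only [hmdef]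
          ring
  -- Jensen step
  have hsumw : ∑ _k : Fin K, ((K:ℝ)⁻¹) = 1 := by
    rw [Finset.sum_const, nsmul_eq_mul]
    simp [Finset.card_univ]
    field_simp
  have hj0 := fent_concave.le_map_sum (t := Finset.univ) (w := fun _ => (K:ℝ)⁻¹)
    (p := m) (fun k _ => by positivity) hsumw (fun k _ => hm2 k)
  have hmsum : ∑ k : Fin K, (K:ℝ)⁻¹ • m k = (N:ℝ) / K := by
    simp only [smul_eq_mul, ← Finset.mul_sum, hmdef]
    have : ∑ k : Fin K, ((S k).card : ℝ) = (N:ℝ) := by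
      rw [← Nat.cast_sum, ← hcard]
      simp
    rw [this, inv_mul_eq_div]
  rw [hmsum] at hj0
  have hjensen : ∑ k : Fin K, fent (m k) ≤ (K:ℝ) * fent ((N:ℝ)/K) := by
    have h := mul_le_mul_of_nonneg_left hj0 hK0.le
    calc ∑ k : Fin K, fent (m k) = (K:ℝ) * ∑ k : Fin K, (K:ℝ)⁻¹ • fent (m k) := by
          simp only [smul_eq_mul, ← Finset.mul_sum]
          rw [← mul_assoc, mul_inv_cancel₀ hK0.ne', one_mul]
      _ ≤ (K:ℝ) * fent ((N:ℝ)/K) := h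
  -- closed form of K * fent (N/K)
  have hfin : (K:ℝ) * fent ((N:ℝ)/K)
      = (N:ℝ) * Real.log ((K:ℝ)/N) + (N:ℝ) * ((N:ℝ)/K - 1) * Real.log (1 - (K:ℝ)/N) := by
    have e1 : (1:ℝ) - (K:ℝ)/N = ((N:ℝ) - K)/N := by field_simp
    have e2 : (N:ℝ)/K - 1 = ((N:ℝ) - K)/K := by field_simp
    have hl1 : Real.log ((K:ℝ)/N) = Real.log K - Real.log N := Real.log_div hK0.ne' hN0.ne'
    have hl2 : Real.log (1 - (K:ℝ)/N) = Real.log ((N:ℝ) - K) - Real.log N := by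
      rw [e1, Real.log_div hNK.ne' hN0.ne']
    have hl3 : Real.log ((N:ℝ)/K - 1) = Real.log ((N:ℝ) - K) - Real.log K := by
      rw [e2, Real.log_div hNK.ne' hK0.ne']
    have hl4 : Real.log ((N:ℝ)/K) = Real.log N - Real.log K := Real.log_div hN0.ne' hK0.ne'
    rw [fent, hl3, hl4, hl1, hl2]
    field_simp
    ring
  -- put everything together
  have hT : ∑ n : Fin N, T n ≤
      (N:ℝ) * Real.log ((K:ℝ)/N) + (N:ℝ) * ((N:ℝ)/K - 1) * Real.log (1 - (K:ℝ)/N) := by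
    calc ∑ n : Fin N, T n = ∑ k : Fin K, ∑ n ∈ S k, T n :=
          (Finset.sum_fiberwise Finset.univ a T).symm
      _ ≤ ∑ k : Fin K, fent (m k) := Finset.sum_le_sum fun k _ => hchan k
      _ ≤ (K:ℝ) * fent ((N:ℝ)/K) := hjensen
      _ = _ := hfin
  calc ∑ n : Fin N,
        Real.log (u n (a n) * P n *
          ∏ i ∈ Finset.univ.filter (fun i => i ≠ n ∧ a i = a n), (1 - P i))
      = ∑ n : Fin N, (Real.log (u n (a n)) + T n) :=
        Finset.sum_congr rfl fun n _ => hsplit n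
    _ = (∑ n : Fin N, Real.log (u n (a n))) + ∑ n : Fin N, T n := Finset.sum_add_distrib
    _ ≤ (∑ n : Fin N,
          Finset.univ.sup' ⟨⟨0, hK⟩, Finset.mem_univ _⟩ (fun k => Real.log (u n k))) +
        ((N:ℝ) * Real.log ((K:ℝ)/N) + (N:ℝ) * ((N:ℝ)/K - 1) * Real.log (1 - (K:ℝ)/N)) :=
        add_le_add hu_bound hT
    _ = _ := by ring
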